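/- Let (f, φ) be a measurable lens between standard Borel spaces X and Y, let p be a probability measure on X, and let s be a probability measure on Y × Y whose first marginal equals f♯p. Then the lifted coupling L(p,s) is a lifting of s at p: the first marginal of L(p,s) equals p, and the pushforward of L(p,s) along (x,x') ↦ (f(x), f(x')) equals s. -/

import Mathlib

open MeasureTheory ProbabilityTheory

variable {X Y : Type*} [MeasurableSpace X] [StandardBorelSpace X] [Nonempty X]
  [MeasurableSpace Y] [StandardBorelSpace Y] [Nonempty Y]

/-- The lifted coupling `L(p,s)` associated to a (measurable) lens `(f, φ)`: the
composition-product of `p` with the Markov kernel sending `x` to the pushforward of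
`s⃗(·| f x)` along `y ↦ φ(x, y)`, so that
`L(p,s)(A × A') = ∫_A ∫_Y 1_{A'}(φ(x,y)) s⃗(dy | f x) dp(x)`. -/
noncomputable def liftCoup {f : X → Y} (hf : Measurable f) {φ : X × Y → X}
    (_hφ : Measurable φ) (p : Measure X) [SFinite p]
    (s : Measure (Y × Y)) [IsFiniteMeasure s] : Measure (X × X) :=
  p.compProd ((Kernel.deterministic (id : X → X) measurable_id ×ₖ
    s.condKernel.comap f hf).map φ)

/-- For a measurable lens `(f, φ)` between standard Borel spaces, and `s` a probability
measure on `Y × Y` whose first marginal is `f♯p`, the lifted coupling `L(p,s)` is a lifting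
of `s` at `p`: its first marginal is `p` and its pushforward along `f × f` is `s`. -/
theorem liftCoup_isLifting (f : X → Y) (hf : Measurable f)
    (φ : X × Y → X) (hφ : Measurable φ)
    (hlens1 : ∀ (x : X) (y : Y), f (φ (x, y)) = y)
    (hlens2 : ∀ x : X, φ (x, f x) = x)
    (hlens3 : ∀ (x : X) (y y' : Y), φ (φ (x, y), y') = φ (x, y'))
    (p : Measure X) [IsProbabilityMeasure p]
    (s : Measure (Y × Y)) [IsProbabilityMeasure s] (hs : s.fst = p.map f) :
    (liftCoup hf hφ p s).fst = p ∧ (liftCoup hf hφ p s).map (Prod.map f f) = s := by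
  have hK : IsMarkovKernel ((Kernel.deterministic (id : X → X) measurable_id ×ₖ
      s.condKernel.comap f hf).map φ) := Kernel.IsMarkovKernel.map _ hφ
  constructor
  · rw [liftCoup, Measure.fst_compProd]
  · ext t ht
    rw [Measure.map_apply (hf.prodMap hf) ht, liftCoup,
      Measure.compProd_apply ((hf.prodMap hf) ht)]
    have hcalc : ∀ x : X,
        ((Kernel.deterministic (id : X → X) measurable_id ×ₖ
          s.condKernel.comap f hf).map φ) x (Prod.mk x ⁻¹' (Prod.map f f ⁻¹' t))
        = s.condKernel (f x) (Prod.mk (f x) ⁻¹' t) := by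
      intro x
      rw [Kernel.map_apply' _ hφ _
        (measurable_prodMk_left ((hf.prodMap hf) ht))]
      have hset : φ ⁻¹' (Prod.mk x ⁻¹' (Prod.map f f ⁻¹' t))
          = Set.univ ×ˢ (Prod.mk (f x) ⁻¹' t) := by
        ext ⟨a, y⟩
        simp [hlens1]
      rw [hset, Kernel.prod_apply' _ _ _ ((MeasurableSet.univ).prod
        (measurable_prodMk_left ht))]
      simp only [Kernel.comap_apply]
      rw [Kernel.lintegral_deterministic']
      · congr 1; ext c; simp
      · simp only [Set.mk_preimage_prod_right (Set.mem_univ _)]; exact measurable_const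
    simp_rw [hcalc]
    have : ∫⁻ x, s.condKernel (f x) (Prod.mk (f x) ⁻¹' t) ∂p
        = ∫⁻ y, s.condKernel y (Prod.mk y ⁻¹' t) ∂(p.map f) := by
      rw [lintegral_map _ hf]
      exact Kernel.measurable_kernel_prodMk_left ht
    rw [this, ← hs, ← Measure.compProd_apply ht, Measure.disintegrate]
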